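/- Let v = ∏_{i≥0} 0·1^{2t_i+1}, with t_i the Thue–Morse sequence. Then for every morphic involution g of {0,1}* (identity or complement), v contains no factor of the form g(x)·x·x·g(x) with x nonempty. -/

import Mathlib

def tm (i : Nat) : Nat := (Nat.digits 2 i).sum % 2

/-- Block `0 1^(2 t_i+1)` of the word **v**. -/
def vBlock (i : Nat) : List Bool := [false] ++ List.replicate (2 * tm i + 1) true

def vPrefix (n : Nat) : List Bool := ((List.range n).map vBlock).flatten

/-- `L` is a factor of the infinite word **v**. -/
def IsFactorV (L : List Bool) : Prop := ∃ n, L <:+: vPrefix n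



lemma tm_lt_two (i : ℕ) : tm i < 2 := Nat.mod_lt _ (by norm_num)

lemma tm_congr {a b : ℕ} (h : a = b) : tm a = tm b := by rw [h]

lemma tm_even (n : ℕ) : tm (2*n) = tm n := by
  rcases Nat.eq_zero_or_pos n with h | h
  · simp [h]
  · unfold tm
    rw [Nat.digits_def' (by norm_num : (1:ℕ) < 2) (by omega)]
    simp [Nat.mul_div_cancel_left _ (by norm_num : (0:ℕ) < 2), Nat.mul_mod_right]

lemma tm_odd (n : ℕ) : tm (2*n+1) = (tm n + 1) % 2 := by
  unfold tm
  rw [Nat.digits_def' (by norm_num : (1:ℕ) < 2) (by omega)]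
  have h1 : (2*n+1) % 2 = 1 := by omega
  have h2 : (2*n+1) / 2 = n := by omega
  rw [h1, h2]
  simp [List.sum_cons, Nat.add_mod, Nat.add_comm]

lemma tm_pair (n : ℕ) : tm (2*n) ≠ tm (2*n+1) := by
  have h1 := tm_even n
  have h2 := tm_odd n
  have := tm_lt_two n
  omega

/-- `tm` on two halves of an even/odd pair differ. -/
lemma tm_pair' {a b : ℕ} (ha : a % 2 = 0) (hb : b = a + 1) : tm a ≠ tm b := by
  have e : a = 2 * (a/2) := by omega
  have e' : b = 2 * (a/2) + 1 := by omega
  rw [tm_congr e, tm_congr e']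
  exact tm_pair _

lemma noAAA (k : ℕ) : ¬(tm k = tm (k+1) ∧ tm (k+1) = tm (k+2)) := by
  rintro ⟨h1, h2⟩
  rcases Nat.even_or_odd k with ⟨n, hn⟩ | ⟨n, hn⟩
  · exact tm_pair' (by omega) rfl h1
  · exact tm_pair' (a := k+1) (by omega) rfl h2

lemma noP2L5 (k : ℕ) :
    ¬(tm k = tm (k+2) ∧ tm (k+1) = tm (k+3) ∧ tm (k+2) = tm (k+4)) := by
  rintro ⟨h1, h2, h3⟩
  rcases Nat.even_or_odd k with hk | hk
  · obtain ⟨n, hn⟩ : ∃ n, k = 2*n := by rcases hk with ⟨n, hn⟩; exact ⟨n, by omega⟩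
    apply noAAA n
    constructor
    · calc tm n = tm (2*n) := (tm_even n).symm
        _ = tm (k+2) := by rw [tm_congr (show k = 2*n from hn)] at h1; exact h1
        _ = tm (2*(n+1)) := tm_congr (by omega)
        _ = tm (n+1) := tm_even _
    · calc tm (n+1) = tm (2*(n+1)) := (tm_even _).symm
        _ = tm (k+2) := tm_congr (by omega)
        _ = tm (k+4) := h3
        _ = tm (2*(n+2)) := tm_congr (by omega)
        _ = tm (n+2) := tm_even _
  · obtain ⟨n, hn⟩ : ∃ n, k = 2*n+1 := by rcases hk with ⟨n, hn⟩; exact ⟨n, by omega⟩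
    apply noAAA n
    have e1 : tm (n+1) = tm (n+2) := by
      calc tm (n+1) = tm (2*(n+1)) := (tm_even _).symm
        _ = tm (k+1) := tm_congr (by omega)
        _ = tm (k+3) := h2
        _ = tm (2*(n+2)) := tm_congr (by omega)
        _ = tm (n+2) := tm_even _
    refine ⟨?_, e1⟩
    have o1 : tm k = (tm n + 1) % 2 := by
      rw [tm_congr (show k = 2*n+1 from hn)]; exact tm_odd n
    have o2 : tm (k+2) = (tm (n+1) + 1) % 2 := by
      rw [tm_congr (show k+2 = 2*(n+1)+1 by omega)]; exact tm_odd (n+1)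
    have b1 := tm_lt_two n
    have b2 := tm_lt_two (n+1)
    omega

lemma lemD : ∀ z, 1 ≤ z → ∀ m, ¬(∀ k ≤ 2*z, tm (m+k) = tm (m+k+z)) := by
  intro z
  induction z using Nat.strong_induction_on with
  | _ z IH =>
    intro hz m H
    rcases Nat.even_or_odd z with ⟨q, hq⟩ | ⟨q, hq⟩
    · -- z = 2q even, q ≥ 1
      have hq2 : z = 2*q := by omega
      have hq1 : 1 ≤ q := by omega
      rcases Nat.even_or_odd m with hm | hm
      · obtain ⟨a, ha⟩ : ∃ a, m = 2*a := by rcases hm with ⟨a, _⟩; exact ⟨a, by omega⟩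
        apply IH q (by omega) hq1 a
        intro k hk
        have h := H (2*k) (by omega)
        calc tm (a+k) = tm (2*(a+k)) := (tm_even _).symm
          _ = tm (m+2*k) := tm_congr (by omega)
          _ = tm (m+2*k+z) := h
          _ = tm (2*(a+k+q)) := tm_congr (by omega)
          _ = tm (a+k+q) := tm_even _
      · obtain ⟨a, ha⟩ : ∃ a, m = 2*a+1 := hm
        apply IH q (by omega) hq1 a
        intro k hk
        rcases Nat.eq_zero_or_pos k with hk0 | hk0
        · subst hk0
          have h := H 0 (by omega)
          have o1 : tm (m+0) = (tm a + 1) % 2 := by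
            rw [tm_congr (show m+0 = 2*a+1 by omega)]; exact tm_odd a
          have o2 : tm (m+0+z) = (tm (a+q) + 1) % 2 := by
            rw [tm_congr (show m+0+z = 2*(a+q)+1 by omega)]; exact tm_odd (a+q)
          have b1 := tm_lt_two a
          have b2 := tm_lt_two (a+q)
          have : tm a = tm (a+q) := by omega
          calc tm (a+0) = tm a := tm_congr (by omega)
            _ = tm (a+q) := this
            _ = tm (a+0+q) := tm_congr (by omega)
        · have h := H (2*k-1) (by omega)
          calc tm (a+k) = tm (2*(a+k)) := (tm_even _).symm
            _ = tm (m+(2*k-1)) := tm_congr (by omega)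
            _ = tm (m+(2*k-1)+z) := h
            _ = tm (2*(a+k+q)) := tm_congr (by omega)
            _ = tm (a+k+q) := tm_even _
    · -- z odd
      rcases Nat.eq_or_lt_of_le hz with hz1 | hz3
      · -- z = 1
        apply noAAA m
        have h0 := H 0 (by omega)
        have h1 := H 1 (by omega)
        rw [← hz1] at h0 h1
        constructor
        · calc tm m = tm (m+0) := tm_congr (by omega)
            _ = tm (m+0+1) := h0
            _ = tm (m+1) := tm_congr (by omega)
        · calc tm (m+1) = tm (m+1+1) := h1
            _ = tm (m+2) := tm_congr (by omega)
      · -- z odd, z ≥ 3 (note z even was other branch; here z = 2q+1, and z ≥ 2 means z ≥ 3)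
        have hzodd : z = 2*q+1 := by omega
        have hz3' : 3 ≤ z := by omega
        have step1 : ∀ k, k + 1 ≤ 2*z → tm (m+k) ≠ tm (m+k+1) := by
          intro k hk heq
          rcases Nat.even_or_odd (m+k) with ⟨p, hp⟩ | ⟨p, hp⟩
          · exact tm_pair' (by omega) rfl heq
          · have h1 := H k (by omega)
            have h2 := H (k+1) (by omega)
            apply tm_pair' (a := m+k+z) (by omega) rfl
            calc tm (m+k+z) = tm (m+k) := h1.symm
              _ = tm (m+k+1) := heq
              _ = tm (m+(k+1)) := tm_congr (by omega)
              _ = tm (m+(k+1)+z) := h2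
              _ = tm (m+k+z+1) := tm_congr (by omega)
        have step2 : ∀ k, k + 2 ≤ 2*z → tm (m+k) = tm (m+k+2) := by
          intro k hk
          have a1 := step1 k (by omega)
          have a2 := step1 (k+1) (by omega)
          have b0 := tm_lt_two (m+k)
          have b1 := tm_lt_two (m+k+1)
          have b2 := tm_lt_two (m+k+2)
          have e : tm (m+(k+1)) = tm (m+k+1) := tm_congr (by omega)
          have e2 : tm (m+(k+1)+1) = tm (m+k+2) := tm_congr (by omega)
          rw [e, e2] at a2
          omega
        apply noP2L5 m
        have s0 := step2 0 (by omega)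
        have s1 := step2 1 (by omega)
        have s2 := step2 2 (by omega)
        refine ⟨?_, ?_, ?_⟩
        · calc tm m = tm (m+0) := tm_congr (by omega)
            _ = tm (m+0+2) := s0
            _ = tm (m+2) := tm_congr (by omega)
        · calc tm (m+1) = tm (m+1+2) := s1
            _ = tm (m+3) := tm_congr (by omega)
        · calc tm (m+2) = tm (m+2+2) := s2
            _ = tm (m+4) := tm_congr (by omega)





def P : ℕ → ℕ
  | 0 => 0
  | (i+1) => P i + 2 * tm i + 2

lemma P_succ (i : ℕ) : P (i+1) = P i + 2 * tm i + 2 := rfl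

lemma P_mono : StrictMono P := strictMono_nat_of_lt_succ (fun n => by rw [P_succ]; omega)

lemma P_even (i : ℕ) : P i % 2 = 0 := by
  induction i with
  | zero => rfl
  | succ n ih => rw [P_succ]; omega

lemma P_ge (i : ℕ) : 2*i ≤ P i := by
  induction i with
  | zero => simp
  | succ n ih => rw [P_succ]; omega

def fV (k : ℕ) : Bool := !decide (∃ i, i ≤ k ∧ P i = k)

lemma fV_false_iff (k : ℕ) : fV k = false ↔ ∃ i, P i = k := by
  unfold fV
  simp only [Bool.not_eq_false', decide_eq_true_eq]
  constructor
  · rintro ⟨i, _, h⟩; exact ⟨i, h⟩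
  · rintro ⟨i, h⟩
    exact ⟨i, by have := P_ge i; omega, h⟩

lemma fV_P (i : ℕ) : fV (P i) = false := (fV_false_iff _).mpr ⟨i, rfl⟩

lemma fV_even {k : ℕ} (h : fV k = false) : k % 2 = 0 := by
  obtain ⟨i, hi⟩ := (fV_false_iff _).mp h
  rw [← hi]; exact P_even i

lemma fV_true_between {i k : ℕ} (h1 : P i < k) (h2 : k < P (i+1)) : fV k = true := by
  by_contra h
  have h' : fV k = false := by revert h; cases fV k <;> simp
  obtain ⟨j, hj⟩ := (fV_false_iff _).mp h'
  rcases lt_or_ge i j with h | h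
  · have : P (i+1) ≤ P j := P_mono.le_iff_le.mpr (by omega)
    omega
  · have : P j ≤ P i := P_mono.le_iff_le.mpr h
    omega

lemma net4 (k : ℕ) : ∃ e, e ≤ 3 ∧ fV (k+e) = false := by
  suffices h : ∃ i, k ≤ P i ∧ P i ≤ k + 3 by
    obtain ⟨i, h1, h2⟩ := h
    exact ⟨P i - k, by omega, by rw [show k + (P i - k) = P i by omega]; exact fV_P i⟩
  induction k with
  | zero => exact ⟨0, by simp [P]⟩
  | succ n ih =>
    obtain ⟨i, h1, h2⟩ := ih
    rcases Nat.lt_or_ge n (P i) with h | h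
    · exact ⟨i, by omega, by omega⟩
    · have hni : P i = n := by omega
      refine ⟨i+1, ?_, ?_⟩ <;> rw [P_succ] <;> have := tm_lt_two i <;> omega

lemma gap2 {k i : ℕ} (h0 : P i = k) (h2 : fV (k+2) = false) :
    tm i = 0 ∧ P (i+1) = k+2 := by
  obtain ⟨j, hj⟩ := (fV_false_iff _).mp h2
  have hij : i < j := P_mono.lt_iff_lt.mp (by omega)
  have : P (i+1) ≤ P j := P_mono.le_iff_le.mpr (by omega)
  have hs := P_succ i
  omega

lemma gap4 {k i : ℕ} (h0 : P i = k) (h2 : fV (k+2) = true) :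
    tm i = 1 ∧ P (i+1) = k+4 := by
  have hs := P_succ i
  have ht := tm_lt_two i
  rcases (by omega : tm i = 0 ∨ tm i = 1) with h | h
  · exfalso
    have hP : P (i+1) = k + 2 := by omega
    have hf := fV_P (i+1)
    rw [hP, h2] at hf
    exact Bool.noConfusion hf
  · omega

lemma vPrefix_eq (n : ℕ) : vPrefix n = (List.range (P n)).map fV := by
  induction n with
  | zero => simp [vPrefix, P]
  | succ n ih =>
    have lhs : vPrefix (n+1) = vPrefix n ++ vBlock n := by
      unfold vPrefix
      rw [List.range_succ, List.map_append, List.flatten_append]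
      simp
    rw [lhs, ih, P_succ, show P n + 2 * tm n + 2 = P n + (2 * tm n + 2) by omega,
      List.range_add, List.map_append]
    congr 1
    rw [List.map_map]
    have hfP := fV_P n
    rcases (by have := tm_lt_two n; omega : tm n = 0 ∨ tm n = 1) with h | h
    · have h1 : fV (P n + 1) = true :=
        fV_true_between (i := n) (by omega) (by rw [P_succ]; omega)
      rw [h]; norm_num [List.range_succ, vBlock, h]
      exact ⟨hfP, h1⟩
    · have hstep : P (n+1) = P n + 4 := by rw [P_succ]; omega
      have h1 : fV (P n + 1) = true := fV_true_between (i := n) (by omega) (by omega)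
      have h2 : fV (P n + 2) = true := fV_true_between (i := n) (by omega) (by omega)
      have h3 : fV (P n + 3) = true := fV_true_between (i := n) (by omega) (by omega)
      rw [h]; norm_num [List.range_succ, vBlock, h, List.replicate_succ]
      exact ⟨hfP, h1, h2, h3⟩

lemma getElem_idx_congr {α} (l : List α) {i j : ℕ} (h : i = j) (hi : i < l.length) :
    l[i] = l[j]'(h ▸ hi) := by subst h; rfl

lemma app_mid (s L t : List Bool) (j : ℕ) (hj : j < L.length)
    (h : s.length + j < (s ++ (L ++ t)).length) :
    (s ++ (L ++ t))[s.length + j] = L[j] := by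
  rw [List.getElem_append_right (by omega)]
  rw [getElem_idx_congr _ (show s.length + j - s.length = j by omega)]
  exact List.getElem_append_left hj

lemma app4_1 (p q r u : List Bool) (j : ℕ) (hj : j < p.length)
    (h : j < (p ++ q ++ r ++ u).length) : (p ++ q ++ r ++ u)[j] = p[j] := by
  rw [List.getElem_append_left (show j < ((p++q)++r).length by simp only [List.length_append]; omega),
    List.getElem_append_left (show j < (p++q).length by simp only [List.length_append]; omega),
    List.getElem_append_left hj]

lemma app4_2 (p q r u : List Bool) (j : ℕ) (hj : j < q.length)
    (h : p.length + j < (p ++ q ++ r ++ u).length) :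
    (p ++ q ++ r ++ u)[p.length + j] = q[j] := by
  rw [List.getElem_append_left (show p.length + j < ((p++q)++r).length by simp only [List.length_append]; omega),
    List.getElem_append_left (show p.length + j < (p++q).length by simp only [List.length_append]; omega),
    List.getElem_append_right (show p.length ≤ p.length + j by omega)]
  rw [getElem_idx_congr _ (show p.length + j - p.length = j by omega)]

lemma app4_3 (p q r u : List Bool) (j : ℕ) (hj : j < r.length)
    (h : p.length + q.length + j < (p ++ q ++ r ++ u).length) :
    (p ++ q ++ r ++ u)[p.length + q.length + j] = r[j] := by
  rw [List.getElem_append_left (show p.length + q.length + j < ((p++q)++r).length by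
      simp only [List.length_append]; omega),
    List.getElem_append_right (show (p++q).length ≤ p.length + q.length + j by
      simp only [List.length_append]; omega)]
  rw [getElem_idx_congr _ (show p.length + q.length + j - (p++q).length = j by
    simp only [List.length_append]; omega)]

lemma app4_4 (p q r u : List Bool) (j : ℕ) (hj : j < u.length)
    (h : p.length + q.length + r.length + j < (p ++ q ++ r ++ u).length) :
    (p ++ q ++ r ++ u)[p.length + q.length + r.length + j] = u[j] := by
  rw [List.getElem_append_right (show ((p++q)++r).length ≤ p.length + q.length + r.length + j by
    simp only [List.length_append]; omega)]
  rw [getElem_idx_congr _ (show p.length + q.length + r.length + j - ((p++q)++r).length = j by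
    simp only [List.length_append]; omega)]
-- ===== layer 4: derived contradiction lemmas =====

lemma fV_congr {a b : ℕ} (h : a = b) : fV a = fV b := by rw [h]

lemma bne_t {a b : Bool} (h : a ≠ b) (hb : b = false) : a = true := by
  subst hb; cases a <;> simp_all

lemma bne_f {a b : Bool} (h : a ≠ b) (hb : b = true) : a = false := by
  subst hb; cases a <;> simp_all

lemma three_gap2 {k i : ℕ} (h0 : P i = k) (h2 : fV (k+2) = false)
    (h4 : fV (k+4) = false) (h6 : fV (k+6) = false) : False := by
  obtain ⟨t0, e0⟩ := gap2 h0 h2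
  have h4' : fV (k+2+2) = false := by rw [fV_congr (show k+2+2 = k+4 by omega)]; exact h4
  obtain ⟨t1, e1⟩ := gap2 e0 h4'
  have h6' : fV (k+2+2+2) = false := by rw [fV_congr (show k+2+2+2 = k+6 by omega)]; exact h6
  have e0' : P (i+1) = k+2 := e0
  have e1' : P (i+1+1) = k+2+2 := e1
  obtain ⟨t2, _⟩ := gap2 e1' h6'
  apply noAAA i
  have c1 : tm (i+1+1) = tm (i+2) := by rw [show i+1+1 = i+2 by omega]
  omega

lemma three_gap4 {k i : ℕ} (h0 : P i = k) (h2 : fV (k+2) = true)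
    (h6 : fV (k+6) = true) (h10 : fV (k+10) = true) : False := by
  obtain ⟨t0, e0⟩ := gap4 h0 h2
  have h6' : fV (k+4+2) = true := by rw [fV_congr (show k+4+2 = k+6 by omega)]; exact h6
  obtain ⟨t1, e1⟩ := gap4 e0 h6'
  have h10' : fV (k+4+4+2) = true := by rw [fV_congr (show k+4+4+2 = k+10 by omega)]; exact h10
  have e1' : P (i+1+1) = k+4+4 := e1
  obtain ⟨t2, _⟩ := gap4 e1' h10'
  apply noAAA i
  have c1 : tm (i+1+1) = tm (i+2) := by rw [show i+1+1 = i+2 by omega]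
  omega

lemma chainCS {a b l : ℕ} (hab : P b = P a + l)
    (htr : fV (P a + 2) = fV (P a + 2 + l)) :
    tm a = tm b ∧ P (b+1) = P (a+1) + l := by
  have hsa := P_succ a
  have hsb := P_succ b
  rcases (show tm a = 0 ∨ tm a = 1 by have := tm_lt_two a; omega) with h | h
  · have hf : fV (P a + 2) = false := by
      rw [fV_congr (show P a + 2 = P (a+1) by omega)]; exact fV_P (a+1)
    have hf2 : fV (P b + 2) = false := by
      rw [fV_congr (show P b + 2 = P a + 2 + l by omega), ← htr]; exact hf
    obtain ⟨tb, eb⟩ := gap2 (rfl : P b = P b) hf2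
    exact ⟨by omega, by omega⟩
  · have hf : fV (P a + 2) = true := fV_true_between (i := a) (by omega) (by omega)
    have hf2 : fV (P b + 2) = true := by
      rw [fV_congr (show P b + 2 = P a + 2 + l by omega), ← htr]; exact hf
    obtain ⟨tb, eb⟩ := gap4 (rfl : P b = P b) hf2
    exact ⟨by omega, by omega⟩

-- ===== identity case =====

lemma id_case (m l : ℕ) (hl : 1 ≤ l)
    (Hper : ∀ j, j < 3*l → fV (m+j) = fV (m+j+l)) : False := by
  obtain ⟨e, he3, hez⟩ := net4 m
  rcases Nat.lt_or_ge l 2 with hl1 | hl2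
  · -- l = 1
    have h1 : l = 1 := by omega
    subst h1
    have a0 : fV m = fV (m+1) := by
      have := Hper 0 (by omega)
      rwa [fV_congr (show m+0 = m by omega), fV_congr (show m+0+1 = m+1 by omega)] at this
    have a1 : fV (m+1) = fV (m+2) := by
      have := Hper 1 (by omega)
      rwa [fV_congr (show m+1+1 = m+2 by omega)] at this
    have a2 : fV (m+2) = fV (m+3) := by
      have := Hper 2 (by omega)
      rwa [fV_congr (show m+2+1 = m+3 by omega)] at this
    have hm0 : fV m = false := by
      interval_cases e
      · rwa [fV_congr (show m = m + 0 by omega)]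
      · rw [a0]; exact hez
      · rw [a0, a1]; exact hez
      · rw [a0, a1, a2]; exact hez
    have hm1 : fV (m+1) = false := by rw [← a0]; exact hm0
    have p0 := fV_even hm0
    have p1 := fV_even hm1
    omega
  · -- l ≥ 2 : get shift interface
    have shift : ∀ k, m ≤ k → k < m + 3*l → fV (k + l) = fV k := by
      intro k h1 h2
      have := Hper (k - m) (by omega)
      rw [fV_congr (show m + (k-m) = k by omega),
        fV_congr (show m+(k-m)+l = k+l by omega)] at this
      exact this.symm
    have hz2 : fV (m + e + l) = false := by
      rw [shift (m+e) (by omega) (by omega)]; exact hez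
    -- parity : l even
    have p1 := fV_even hez
    have p2 := fV_even hz2
    have hlev : l % 2 = 0 := by omega
    rcases (show l = 2 ∨ l = 4 ∨ 6 ≤ l by omega) with h2 | h4 | h6
    · -- l = 2
      subst h2
      obtain ⟨s, hs1, hsz⟩ : ∃ s, s ≤ 1 ∧ fV (m+s) = false := by
        rcases Nat.lt_or_ge e 2 with h | h
        · exact ⟨e, by omega, hez⟩
        · refine ⟨e - 2, by omega, ?_⟩
          rw [show m + (e-2) = m + e - 2 by omega, ← shift (m+e-2) (by omega) (by omega),
            fV_congr (show m+e-2+2 = m+e by omega)]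
          exact hez
      have z1 : fV (m+s+2) = false := by
        rw [shift (m+s) (by omega) (by omega)]; exact hsz
      have z2 : fV (m+s+4) = false := by
        rw [fV_congr (show m+s+4 = m+s+2+2 by omega), shift (m+s+2) (by omega) (by omega)]
        exact z1
      have z3 : fV (m+s+6) = false := by
        rw [fV_congr (show m+s+6 = m+s+4+2 by omega), shift (m+s+4) (by omega) (by omega)]
        exact z2
      obtain ⟨i, hi⟩ := (fV_false_iff _).mp hsz
      exact three_gap2 hi z1 z2 z3
    · -- l = 4
      subst h4
      have z1 : fV (m+e+4) = false := by
        rw [shift (m+e) (by omega) (by omega)]; exact hez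
      have z2 : fV (m+e+8) = false := by
        rw [fV_congr (show m+e+8 = m+e+4+4 by omega), shift (m+e+4) (by omega) (by omega)]
        exact z1
      obtain ⟨i, hi⟩ := (fV_false_iff _).mp hez
      cases hc : fV (m+e+2) with
      | false =>
        have z6 : fV (m+e+6) = false := by
          rw [fV_congr (show m+e+6 = m+e+2+4 by omega), shift (m+e+2) (by omega) (by omega)]
          exact hc
        exact three_gap2 hi hc z1 z6
      | true =>
        have z6 : fV (m+e+6) = true := by
          rw [fV_congr (show m+e+6 = m+e+2+4 by omega), shift (m+e+2) (by omega) (by omega)]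
          exact hc
        have z10 : fV (m+e+10) = true := by
          rw [fV_congr (show m+e+10 = m+e+6+4 by omega), shift (m+e+6) (by omega) (by omega)]
          exact z6
        exact three_gap4 hi hc z6 z10
    · -- l ≥ 6
      obtain ⟨i0, hi0⟩ := (fV_false_iff _).mp hez
      obtain ⟨i1, hi1⟩ := (fV_false_iff _).mp hz2
      have hi01 : i0 < i1 := P_mono.lt_iff_lt.mp (by omega)
      set d := i1 - i0 with hdd
      have hd1 : 1 ≤ d := by omega
      have hPd : P (i0 + d) = P i0 + l := by
        rw [show i0 + d = i1 by omega]; omega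
      have Keq : ∀ j, j ≤ 2*d → P (i0 + j + d) = P (i0 + j) + l := by
        intro j
        induction j using Nat.strong_induction_on with
        | _ j IH =>
          intro hj
          match j with
          | 0 =>
            rw [show i0 + 0 + d = i0 + d by omega, show i0 + 0 = i0 by omega]
            exact hPd
          | (n+1) =>
            have hprev : P (i0+n+d) = P (i0+n) + l := IH n (by omega) (by omega)
            have hb : P (i0+n) ≤ m + e + 2*l := by
              rcases le_or_gt n d with h | h
              · have := P_mono.le_iff_le.mpr (show i0 + n ≤ i0 + d by omega)
                omega
              · have h2 := IH (n-d) (by omega) (by omega)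
                rw [show i0 + (n - d) + d = i0 + n by omega] at h2
                have := P_mono.le_iff_le.mpr (show i0 + (n-d) ≤ i0 + d by omega)
                omega
            have hma : m ≤ P (i0+n) := by
              have := P_mono.le_iff_le.mpr (show i0 ≤ i0+n by omega)
              omega
            have htr : fV (P (i0+n) + 2 + l) = fV (P (i0+n) + 2) :=
              shift _ (by omega) (by omega)
            obtain ⟨_, hstep⟩ := chainCS hprev htr.symm
            rw [show i0+(n+1)+d = i0+n+d+1 by omega, show i0+(n+1) = i0+n+1 by omega]
            exact hstep
      have tmEq : ∀ k, k ≤ 2*d → tm (i0+k) = tm (i0+k+d) := by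
        intro k hk
        have hprev : P (i0+k+d) = P (i0+k) + l := Keq k hk
        have hb : P (i0+k) ≤ m + e + 2*l := by
          rcases le_or_gt k d with h | h
          · have := P_mono.le_iff_le.mpr (show i0 + k ≤ i0 + d by omega)
            omega
          · have h2 := Keq (k-d) (by omega)
            rw [show i0 + (k - d) + d = i0 + k by omega] at h2
            have := P_mono.le_iff_le.mpr (show i0 + (k-d) ≤ i0 + d by omega)
            omega
        have hma : m ≤ P (i0+k) := by
          have := P_mono.le_iff_le.mpr (show i0 ≤ i0+k by omega)
          omega
        have htr : fV (P (i0+k) + 2 + l) = fV (P (i0+k) + 2) :=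
          shift _ (by omega) (by omega)
        exact (chainCS hprev htr.symm).1
      exact lemD d (by omega) i0 (fun k hk => tmEq k hk)
-- ===== complement case =====

lemma comp_case (m l : ℕ) (X : ℕ → Bool) (hl : 1 ≤ l)
    (V1 : ∀ j, j < l → fV (m + j) = !(X j))
    (V2 : ∀ j, j < l → fV (m + l + j) = X j)
    (V3 : ∀ j, j < l → fV (m + 2*l + j) = X j)
    (V4 : ∀ j, j < l → fV (m + 3*l + j) = !(X j)) : False := by
  -- x is not all-true
  have hex0 : ∃ j, j < l ∧ X j = false := by
    by_contra h
    push_neg at h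
    have hall : ∀ j, j < l → X j = true := by
      intro j hj; cases hXj : X j
      · exact absurd hXj (h j hj)
      · rfl
    rcases Nat.lt_or_ge l 2 with h1 | h2
    · have hl1 : l = 1 := by omega
      have z0 : fV (m + 0) = false := by rw [V1 0 (by omega), hall 0 (by omega)]; rfl
      have z3 : fV (m + 3) = false := by
        rw [fV_congr (show m + 3 = m + 3*l + 0 by omega), V4 0 (by omega), hall 0 (by omega)]
        rfl
      have := fV_even z0; have := fV_even z3; omega
    · have z0 : fV (m + 0) = false := by rw [V1 0 (by omega), hall 0 (by omega)]; rfl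
      have z1 : fV (m + 1) = false := by rw [V1 1 (by omega), hall 1 (by omega)]; rfl
      have := fV_even z0; have := fV_even z1; omega
  -- x is not all-false
  have hex1 : ∃ j, j < l ∧ X j = true := by
    by_contra h
    push_neg at h
    have hall : ∀ j, j < l → X j = false := by
      intro j hj; cases hXj : X j
      · rfl
      · exact absurd hXj (h j hj)
    rcases Nat.lt_or_ge l 2 with h1 | h2
    · have hl1 : l = 1 := by omega
      have z1 : fV (m + 1) = false := by
        rw [fV_congr (show m + 1 = m + l + 0 by omega), V2 0 (by omega)]; exact hall 0 (by omega)
      have z2 : fV (m + 2) = false := by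
        rw [fV_congr (show m + 2 = m + 2*l + 0 by omega), V3 0 (by omega)]; exact hall 0 (by omega)
      have := fV_even z1; have := fV_even z2; omega
    · have z1 : fV (m + l + 0) = false := by rw [V2 0 (by omega)]; exact hall 0 (by omega)
      have z2 : fV (m + l + 1) = false := by rw [V2 1 (by omega)]; exact hall 1 (by omega)
      have := fV_even z1; have := fV_even z2; omega
  obtain ⟨j0, hj0, hXj0⟩ := hex0
  obtain ⟨j1, hj1, hXj1⟩ := hex1
  have hl2 : 2 ≤ l := by
    by_contra h
    have : j0 = 0 ∧ j1 = 0 := by omega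
    rw [this.1] at hXj0; rw [this.2] at hXj1
    rw [hXj0] at hXj1; exact Bool.noConfusion hXj1
  -- l is even
  have hlev : l % 2 = 0 := by
    have z0 : fV (m + j1) = false := by rw [V1 j1 hj1, hXj1]; rfl
    have z3 : fV (m + 3*l + j1) = false := by rw [V4 j1 hj1, hXj1]; rfl
    have := fV_even z0; have := fV_even z3; omega
  -- x alternates
  have alt : ∀ j, j + 1 < l → X (j+1) = !(X j) := by
    intro j hj
    cases hA : X j <;> cases hB : X (j+1)
    · exfalso
      have z1 : fV (m + l + j) = false := by rw [V2 j (by omega), hA]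
      have z2 : fV (m + l + (j+1)) = false := by rw [V2 (j+1) (by omega), hB]
      have := fV_even z1; have := fV_even z2; omega
    · rfl
    · rfl
    · exfalso
      have z1 : fV (m + j) = false := by rw [V1 j (by omega), hA]; rfl
      have z2 : fV (m + (j+1)) = false := by rw [V1 (j+1) (by omega), hB]; rfl
      have := fV_even z1; have := fV_even z2; omega
  have altpar : ∀ j, j < l → X j = (if j % 2 = 0 then X 0 else !(X 0)) := by
    intro j
    induction j with
    | zero => intro _; simp
    | succ n ih =>
      intro hn
      rw [alt n (by omega), ih (by omega)]
      rcases Nat.even_or_odd n with ⟨p, hp⟩ | ⟨p, hp⟩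
      · rw [if_pos (by omega), if_neg (by omega)]
      · rw [if_neg (by omega), if_pos (by omega), Bool.not_not]
  -- special case l = 2
  rcases (show l = 2 ∨ 4 ≤ l by omega) with hll | hll
  · subst hll
    have hX1 : X 1 = !(X 0) := alt 0 (by omega)
    cases hA : X 0
    · have z1 : fV (m + 1) = false := by rw [V1 1 (by omega), hX1, hA]; rfl
      have z2 : fV (m + 2) = false := by
        rw [fV_congr (show m + 2 = m + 2 + 0 by omega), V2 0 (by omega), hA]
      have := fV_even z1; have := fV_even z2; omega
    · have z1 : fV (m + 5) = false := by
        rw [fV_congr (show m + 5 = m + 2*2 + 1 by omega), V3 1 (by omega), hX1, hA]; rfl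
      have z2 : fV (m + 6) = false := by
        rw [fV_congr (show m + 6 = m + 3*2 + 0 by omega), V4 0 (by omega), hA]; rfl
      have := fV_even z1; have := fV_even z2; omega
  -- l ≥ 4 even : the middle x x is alternating of length 2l ≥ 8
  · have alt2 : ∀ p, p + 1 < 2*l → fV (m + l + p) ≠ fV (m + l + (p+1)) := by
      intro p hp
      rcases (show p + 1 < l ∨ p + 1 = l ∨ l < p + 1 by omega) with h | h | h
      · rw [V2 p (by omega), V2 (p+1) (by omega), alt p (by omega)]
        cases X p <;> simp
      · have hpl : p = l - 1 := by omega
        rw [V2 p (by omega), fV_congr (show m + l + (p+1) = m + 2*l + 0 by omega),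
          V3 0 (by omega), altpar p (by omega), if_neg (by omega)]
        cases X 0 <;> simp
      · have hq : p - l + 1 < l := by omega
        rw [fV_congr (show m + l + p = m + 2*l + (p - l) by omega),
          fV_congr (show m + l + (p+1) = m + 2*l + (p - l + 1) by omega),
          V3 (p-l) (by omega), V3 (p-l+1) (by omega), alt (p-l) (by omega)]
        cases X (p-l) <;> simp
    -- find a zero at m+l+s with s ≤ 1
    obtain ⟨e, he3, hez⟩ := net4 (m+l)
    obtain ⟨s, hs1, hsz⟩ : ∃ s, s ≤ 1 ∧ fV (m + l + s) = false := by
      rcases Nat.lt_or_ge e 2 with h | h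
      · exact ⟨e, by omega, hez⟩
      · have t1 : fV (m + l + (e-1)) = true := by
          have hne := alt2 (e-1) (by omega)
          rw [show e - 1 + 1 = e by omega] at hne
          exact bne_t hne hez
        have z1 : fV (m + l + (e-2)) = false := by
          have hne := alt2 (e-2) (by omega)
          rw [show e - 2 + 1 = e - 1 by omega] at hne
          exact bne_f hne t1
        exact ⟨e-2, by omega, z1⟩
    -- zeros at s, s+2, s+4, s+6
    have step : ∀ p, p + 2 ≤ 7 → fV (m + l + p) = false → fV (m + l + (p+2)) = false := by
      intro p hp hz
      have t1 : fV (m + l + (p+1)) = true := bne_t (alt2 p (by omega)).symm hz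
      exact bne_f (alt2 (p+1) (by omega)).symm t1
    have z2 := step s (by omega) hsz
    have z4 := step (s+2) (by omega) z2
    have z6 := step (s+4) (by omega) z4
    obtain ⟨i, hi⟩ := (fV_false_iff _).mp hsz
    apply three_gap2 hi
    · rw [fV_congr (show m + l + s + 2 = m + l + (s+2) by omega)]; exact z2
    · rw [fV_congr (show m + l + s + 4 = m + l + (s+2+2) by omega)]; exact z4
    · rw [fV_congr (show m + l + s + 6 = m + l + (s+2+2+2) by omega)]; exact z6
-- ===== from factor to pointwise =====

lemma factor_pointwise {L : List Bool} (h : IsFactorV L) :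
    ∃ m, ∀ j (hj : j < L.length), L[j] = fV (m + j) := by
  obtain ⟨n, s, t, hst⟩ := h
  refine ⟨s.length, fun j hj => ?_⟩
  have hst' : s ++ (L ++ t) = List.map fV (List.range (P n)) := by
    rw [← List.append_assoc, hst, vPrefix_eq]
  have hlen : s.length + j < (s ++ (L ++ t)).length := by
    simp only [List.length_append]; omega
  have h1 : (s ++ (L ++ t))[s.length + j] = L[j] := app_mid s L t j hj hlen
  rw [← h1]
  have hlen2 : s.length + j < (List.map fV (List.range (P n))).length := by
    rw [← hst']; exact hlen
  have h2 : (s ++ (L ++ t))[s.length + j] = (List.map fV (List.range (P n)))[s.length + j]'hlen2 := by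
    congr 1
  rw [h2, List.getElem_map]
  congr 1
  exact List.getElem_range _

theorem stmt13 (x : List Bool) (hx : x ≠ []) (g : List Bool → List Bool)
    (hg : (∀ l, g l = l) ∨ (∀ l, g l = l.map (fun b => !b))) :
    ¬ IsFactorV (g x ++ x ++ x ++ g x) := by
  intro hfac
  obtain ⟨m, hpt⟩ := factor_pointwise hfac
  have hl : 1 ≤ x.length := List.length_pos_iff.mpr hx
  rcases hg with hid | hcomp
  · -- identity case
    rw [hid x] at hpt
    have hwl : (x ++ x ++ x ++ x).length = 4 * x.length := by
      simp only [List.length_append]; omega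
    apply id_case m x.length hl
    intro j hj
    rcases (show j < x.length ∨ (x.length ≤ j ∧ j < 2*x.length) ∨
        (2*x.length ≤ j ∧ j < 3*x.length) by omega) with h | ⟨h1, h2⟩ | ⟨h1, h2⟩
    · have a1 : fV (m + j) = x[j] := by
        rw [← hpt j (by omega)]
        exact app4_1 x x x x j h (by omega)
      have a2 : fV (m + (x.length + j)) = x[j] := by
        rw [← hpt (x.length + j) (by omega)]
        exact app4_2 x x x x j h (by omega)
      rw [a1, fV_congr (show m + j + x.length = m + (x.length + j) by omega), a2]
    · obtain ⟨j', hj'⟩ : ∃ j', j = x.length + j' ∧ j' < x.length := ⟨j - x.length, by omega, by omega⟩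
      have a1 : fV (m + (x.length + j')) = x[j']'(hj'.2) := by
        rw [← hpt (x.length + j') (by omega)]
        exact app4_2 x x x x j' hj'.2 (by omega)
      have a2 : fV (m + (x.length + x.length + j')) = x[j']'(hj'.2) := by
        rw [← hpt (x.length + x.length + j') (by omega)]
        exact app4_3 x x x x j' hj'.2 (by omega)
      rw [fV_congr (show m + j = m + (x.length + j') by omega), a1,
        fV_congr (show m + j + x.length = m + (x.length + x.length + j') by omega), a2]
    · obtain ⟨j', hj'⟩ : ∃ j', j = 2*x.length + j' ∧ j' < x.length := ⟨j - 2*x.length, by omega, by omega⟩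
      have a1 : fV (m + (x.length + x.length + j')) = x[j']'(hj'.2) := by
        rw [← hpt (x.length + x.length + j') (by omega)]
        exact app4_3 x x x x j' hj'.2 (by omega)
      have a2 : fV (m + (x.length + x.length + x.length + j')) = x[j']'(hj'.2) := by
        rw [← hpt (x.length + x.length + x.length + j') (by omega)]
        exact app4_4 x x x x j' hj'.2 (by omega)
      rw [fV_congr (show m + j = m + (x.length + x.length + j') by omega), a1,
        fV_congr (show m + j + x.length = m + (x.length + x.length + x.length + j') by omega), a2]
  · -- complement case
    rw [hcomp x] at hpt
    have hml : (x.map (fun b => !b)).length = x.length := List.length_map _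
    have hwb : (x.map (fun b => !b) ++ x ++ x ++ x.map (fun b => !b)).length = 4 * x.length := by
      simp only [List.length_append, hml]; omega
    set X : ℕ → Bool := fun j => x.getD j true with hXdef
    have hXg : ∀ j (hj : j < x.length), X j = x[j] := fun j hj => List.getD_eq_getElem x true hj
    apply comp_case m x.length X hl
    · intro j hj
      have a1 : fV (m + j) = (x.map (fun b => !b))[j]'(by omega) := by
        rw [← hpt j (by omega)]
        exact app4_1 _ x x _ j (by omega) (by omega)
      rw [a1, List.getElem_map, hXg j hj]
    · intro j hj
      have a1 : fV (m + ((x.map (fun b => !b)).length + j)) = x[j] := by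
        rw [← hpt ((x.map (fun b => !b)).length + j) (by omega)]
        exact app4_2 _ x x _ j hj (by omega)
      rw [fV_congr (show m + x.length + j = m + ((x.map (fun b => !b)).length + j) by rw [hml]; omega),
        a1, hXg j hj]
    · intro j hj
      have a1 : fV (m + ((x.map (fun b => !b)).length + x.length + j)) = x[j] := by
        rw [← hpt ((x.map (fun b => !b)).length + x.length + j) (by omega)]
        exact app4_3 _ x x _ j hj (by omega)
      rw [fV_congr (show m + 2*x.length + j = m + ((x.map (fun b => !b)).length + x.length + j)
          by rw [hml]; omega), a1, hXg j hj]
    · intro j hj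
      have a1 : fV (m + ((x.map (fun b => !b)).length + x.length + x.length + j)) =
          (x.map (fun b => !b))[j]'(by omega) := by
        rw [← hpt ((x.map (fun b => !b)).length + x.length + x.length + j) (by omega)]
        exact app4_4 _ x x _ j (by omega) (by omega)
      rw [fV_congr (show m + 3*x.length + j =
          m + ((x.map (fun b => !b)).length + x.length + x.length + j) by rw [hml]; omega),
        a1, List.getElem_map, hXg j hj]
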